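/- In an independence system (E, C) where every singleton {e} with e ∈ E is independent and where feasibility of a set S_i for advertiser i requires ρ_i(S_i) ≤ B_i with ρ_i monotone, if every advertiser can afford at least one seed (for each i there exists u with ρ_i({u}) ≤ B_i), then the lower rank r of the combined independence system satisfies r ≥ h, where h is the number of advertisers. -/

import Mathlib

open Finset

theorem stmt16 {V : Type*} [Fintype V] [DecidableEq V] (h : ℕ)
    (hV : h ≤ Fintype.card V)
    (ρ : Fin h → Finset V → ℝ) (B : Fin h → ℝ)
    (hmono : ∀ i, ∀ ⦃S T : Finset V⦄, S ⊆ T → ρ i S ≤ ρ i T)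
    (hempty : ∀ i, ρ i ∅ = 0) (hB : ∀ i, 0 ≤ B i)
    -- every singleton is independent: no single incentive exceeds any budget
    (hsingle : ∀ (i : Fin h) (u : V), ρ i {u} ≤ B i)
    (C : Finset (V × Fin h) → Prop)
    (hC : ∀ X, C X ↔
      ((∀ i j : Fin h, i ≠ j →
          Disjoint ((X.filter (fun p => p.2 = i)).image Prod.fst)
                   ((X.filter (fun p => p.2 = j)).image Prod.fst)) ∧
       ∀ i : Fin h, ρ i ((X.filter (fun p => p.2 = i)).image Prod.fst) ≤ B i)) :
    -- every maximal independent set has cardinality at least h,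
    -- hence the lower rank r satisfies r ≥ h
    ∀ X : Finset (V × Fin h), C X →
      (∀ e : V × Fin h, e ∉ X → ¬ C (insert e X)) → h ≤ X.card := by

  intro X hX hmax
  rw [hC] at hX
  obtain ⟨hdisj, hknap⟩ := hX
  by_cases hall : ∀ i : Fin h, ∃ p ∈ X, p.2 = i
  · have himg : (X.image Prod.snd) = Finset.univ := by
      apply eq_univ_iff_forall.mpr
      intro i
      obtain ⟨p, hp, hpi⟩ := hall i
      exact mem_image.mpr ⟨p, hp, hpi⟩
    calc h = (X.image Prod.snd).card := by simp [himg]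
      _ ≤ X.card := card_image_le
  · push_neg at hall
    obtain ⟨i, hi⟩ := hall
    have hfil : X.filter (fun p => p.2 = i) = ∅ := by
      rw [filter_eq_empty_iff]; intro p hp; exact hi p hp
    by_cases hV' : (X.image Prod.fst) = Finset.univ
    · calc h ≤ Fintype.card V := hV
        _ = (X.image Prod.fst).card := by simp [hV']
        _ ≤ X.card := card_image_le
    · obtain ⟨u, hu⟩ : ∃ u : V, u ∉ X.image Prod.fst := by
        by_contra hc; push_neg at hc
        exact hV' (eq_univ_iff_forall.mpr hc)
      have heX : (u, i) ∉ X := fun hm => hu (mem_image_of_mem _ hm)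
      exfalso
      apply hmax (u, i) heX
      rw [hC]
      have hsub : ∀ j : Fin h,
          (X.filter (fun p => p.2 = j)).image Prod.fst ⊆ X.image Prod.fst :=
        fun j => image_subset_image (filter_subset _ _)
      have hfilins : ∀ j : Fin h,
          (insert (u,i) X).filter (fun p => p.2 = j) =
            if j = i then {(u,i)} else X.filter (fun p => p.2 = j) := by
        intro j
        rw [filter_insert]
        split_ifs with h1 h2 h2
        · subst h2; rw [hfil, Finset.insert_empty]
        · exact absurd h1.symm h2
        · exact absurd h2.symm h1
        · rfl
      constructor
      · intro j k hjk
        rw [hfilins j, hfilins k]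
        rw [disjoint_left]
        intro a ha hak
        split_ifs at ha hak with h1 h2 h2
        · exact hjk (h1.trans h2.symm)
        · simp only [image_singleton, mem_singleton] at ha
          subst ha
          exact hu (hsub k hak)
        · simp only [image_singleton, mem_singleton] at hak
          subst hak
          exact hu (hsub j ha)
        · exact (disjoint_left.mp (hdisj j k hjk)) ha hak
      · intro j
        rw [hfilins j]
        split_ifs with h1
        · subst h1; simpa using hsingle j u
        · exact hknap j
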